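/- For every integer k ≥ 2 there exists a connected finite simple graph G of order n = 6k + 1, with girth at least 5, minimum degree at least 2, and location-domination number γLD(G) = (n − 1)/2 = 3k. (In particular, there are infinitely many connected graphs of girth at least 5 and minimum degree at least 2 attaining γLD(G) = (n − 1)/2.) -/

import Mathlib

/-- A set of vertices is *dominating* if every vertex is equal or adjacent to a
member of the set. -/
def SimpleGraph.DominatingSet {V : Type*} (G : SimpleGraph V) (D : Set V) : Prop :=
  ∀ v : V, ∃ d ∈ D, d = v ∨ G.Adj d v

/-- A set `C` is *locating-dominating* if it is dominating and every two distinct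
vertices outside `C` have different neighbourhoods within `C`. -/
def SimpleGraph.LocatingDominatingSet {V : Type*} (G : SimpleGraph V) (C : Set V) : Prop :=
  G.DominatingSet C ∧
    ∀ u ∉ C, ∀ v ∉ C, u ≠ v → G.neighborSet u ∩ C ≠ G.neighborSet v ∩ C

/-- The location-domination number: the minimum size of a locating-dominating set. -/
noncomputable def SimpleGraph.gammaLD {V : Type*} (G : SimpleGraph V) : ℕ :=
  sInf {k : ℕ | ∃ C : Set V, G.LocatingDominatingSet C ∧ C.ncard = k}

set_option linter.unnecessarySeqFocus false

abbrev Vk (k : ℕ) := Option (Fin k × ZMod 6)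

def adjFun (k : ℕ) : Vk k → Vk k → Prop
  | none, none => False
  | none, some p => p.2 = 0
  | some p, none => p.2 = 0
  | some p, some q => p.1 = q.1 ∧ (q.2 = p.2 + 1 ∨ p.2 = q.2 + 1)

def Gk (k : ℕ) : SimpleGraph (Vk k) where
  Adj := adjFun k
  symm := by
    constructor
    rintro (_|p) (_|q) h <;> simp_all [adjFun] <;> tauto
  loopless := by
    constructor
    rintro (_|⟨i,a⟩) h
    · exact h
    · obtain ⟨-, h2 | h2⟩ := h <;>
      · exact (by decide : (0:ZMod 6) ≠ 1) (by simpa using congrArg (· - a) h2)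

@[simp] lemma Gk_adj_some_some (k : ℕ) (p q : Fin k × ZMod 6) :
    (Gk k).Adj (some p) (some q) ↔ p.1 = q.1 ∧ (q.2 = p.2 + 1 ∨ p.2 = q.2 + 1) := Iff.rfl
@[simp] lemma Gk_adj_none_some (k : ℕ) (p : Fin k × ZMod 6) :
    (Gk k).Adj none (some p) ↔ p.2 = 0 := Iff.rfl
@[simp] lemma Gk_adj_some_none (k : ℕ) (p : Fin k × ZMod 6) :
    (Gk k).Adj (some p) none ↔ p.2 = 0 := Iff.rfl

lemma Gk_connected (k : ℕ) : (Gk k).Connected := by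
  rw [SimpleGraph.connected_iff]
  constructor
  · intro u v
    have key : ∀ (i : Fin k) (n : ℕ), (Gk k).Reachable none (some (i, (n : ZMod 6))) := by
      intro i n
      induction n with
      | zero => exact SimpleGraph.Adj.reachable (by simp)
      | succ m ih =>
          refine ih.trans (SimpleGraph.Adj.reachable ?_)
          simp [Nat.cast_succ]
    have key' : ∀ w : Vk k, (Gk k).Reachable none w := by
      rintro (_|⟨i,a⟩)
      · rfl
      · have := key i a.val
        rwa [ZMod.natCast_val, ZMod.cast_id] at this
    exact ((key' u).symm).trans (key' v)
  · exact ⟨none⟩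

lemma Gk_card (k : ℕ) : Fintype.card (Vk k) = 6 * k + 1 := by
  simp [Fintype.card_option, mul_comm]

lemma zkey3 : ∀ a b c : ZMod 6, (b = a + 1 ∨ a = b + 1) → (c = b + 1 ∨ b = c + 1) →
    (a = c + 1 ∨ c = a + 1) → False := by decide

lemma zkey0 : ∀ b c : ZMod 6, b = 0 → c = 0 → ¬(c = b + 1 ∨ b = c + 1) := by decide

lemma zkey4 : ∀ a b c d : ZMod 6, (b = a + 1 ∨ a = b + 1) → (c = b + 1 ∨ b = c + 1) →
    (d = c + 1 ∨ c = d + 1) → (a = d + 1 ∨ d = a + 1) → a ≠ c → b ≠ d → False := by decide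

lemma no3 (k : ℕ) : ∀ a b c : Vk k, (Gk k).Adj a b → (Gk k).Adj b c → (Gk k).Adj c a → False := by
  rintro (_|⟨i,a⟩) (_|⟨j,b⟩) (_|⟨l,c⟩) h1 h2 h3
  · exact h1
  · exact h1
  · exact h3
  · exact zkey0 b c h1 h3 h2.2
  · exact h2
  · exact zkey0 c a h2 h1 h3.2
  · exact zkey0 a b h3 h2 h1.2
  · obtain ⟨e1, r1⟩ := h1
    obtain ⟨e2, r2⟩ := h2
    obtain ⟨e3, r3⟩ := h3
    exact zkey3 a b c r1 r2 r3

lemma no4 (k : ℕ) : ∀ a b c d : Vk k, (Gk k).Adj a b → (Gk k).Adj b c → (Gk k).Adj c d →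
    (Gk k).Adj d a → a ≠ c → b ≠ d → False := by
  rintro (_|⟨i,a⟩) (_|⟨j,b⟩) (_|⟨l,c⟩) (_|⟨m,d⟩) h1 h2 h3 h4 hac hbd
  · exact h1
  · exact h1
  · exact h1
  · exact h1
  · exact hac rfl
  · exact hac rfl
  · exact h4
  · exact hbd (congrArg some (Prod.ext_iff.mpr ⟨h2.1.trans h3.1, h1.trans (Eq.symm ((Gk_adj_some_none k _).mp h4))⟩))
  · exact h2
  · exact h2
  · exact hbd rfl
  · exact hac (congrArg some (Prod.ext_iff.mpr ⟨h4.1.symm.trans h3.1.symm, ((Gk_adj_some_none k _).mp h1).trans (Eq.symm ((Gk_adj_none_some k _).mp h2))⟩))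
  · exact h3
  · exact hbd (congrArg some (Prod.ext_iff.mpr ⟨h1.1.symm.trans h4.1.symm, ((Gk_adj_some_none k _).mp h2).trans (Eq.symm ((Gk_adj_none_some k _).mp h3))⟩))
  · exact hac (congrArg some (Prod.ext_iff.mpr ⟨h1.1.trans h2.1, ((Gk_adj_none_some k _).mp h4).trans (Eq.symm ((Gk_adj_some_none k _).mp h3))⟩))
  · obtain ⟨e1, r1⟩ := h1
    obtain ⟨e2, r2⟩ := h2
    obtain ⟨e3, r3⟩ := h3
    obtain ⟨e4, r4⟩ := h4
    subst e1; subst e2; subst e3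
    exact zkey4 a b c d r1 r2 r3 r4 (fun h => hac (by rw [h])) (fun h => hbd (by rw [h]))

lemma Gk_egirth (k : ℕ) : 5 ≤ (Gk k).egirth := by
  rw [SimpleGraph.le_egirth]
  intro a w hw
  have h5 : 5 ≤ w.length := by
    by_contra h
    push_neg at h
    have h3 := hw.three_le_length
    cases w with
    | nil => simp at h3
    | cons h1 w =>
      cases w with
      | nil => simp at h3
      | cons h2 w =>
        cases w with
        | nil => simp at h3
        | cons h3' w =>
          cases w with
          | nil => exact no3 k _ _ _ h1 h2 h3'
          | cons h4 w =>
            cases w with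
            | nil =>
              rw [SimpleGraph.Walk.isCycle_def] at hw
              have hnd := hw.2
              simp [List.Nodup] at hnd
              exact no4 k _ _ _ _ h1 h2 h3' h4
                (fun hh => hnd.2.1.2 hh.symm) (fun hh => hnd.1.2.1 hh)
            | cons h5 w => simp [SimpleGraph.Walk.length_cons] at h; omega
  exact_mod_cast Nat.cast_le.mpr h5

lemma two_le_ncard_of_pair {V : Type*} [Fintype V] {s : Set V} {x y : V}
    (hxy : x ≠ y) (hx : x ∈ s) (hy : y ∈ s) : 2 ≤ s.ncard := by
  have h1 : ({x, y} : Set V).ncard = 2 := Set.ncard_pair hxy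
  have h2 : ({x, y} : Set V) ⊆ s := by
    intro z hz; rcases hz with rfl | rfl; exacts [hx, hy]
  calc 2 = ({x, y} : Set V).ncard := h1.symm
    _ ≤ s.ncard := Set.ncard_le_ncard h2 (Set.toFinite s)

lemma Gk_minDeg (k : ℕ) (hk : 2 ≤ k) : ∀ v : Vk k, 2 ≤ ((Gk k).neighborSet v).ncard := by
  rintro (_|⟨i,a⟩)
  · refine two_le_ncard_of_pair (x := some (⟨0, by omega⟩, 0)) (y := some (⟨1, by omega⟩, 0))
      (by simp [Fin.ext_iff]) ?_ ?_ <;> simp [SimpleGraph.mem_neighborSet]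
  · refine two_le_ncard_of_pair (x := some (i, a + 1)) (y := some (i, a + 5))
      ?_ ?_ ?_
    · simp only [ne_eq, Option.some_inj, Prod.mk.injEq, true_and]
      intro h
      have := congrArg (· - a) h
      simp at this
      revert this; decide
    · simp [SimpleGraph.mem_neighborSet]
    · simp only [SimpleGraph.mem_neighborSet, Gk_adj_some_some, true_and]
      right
      rw [add_assoc]
      norm_num
      decide

def CF (k : ℕ) : Finset (Vk k) := (Finset.univ ×ˢ ({0,2,4} : Finset (ZMod 6))).image some

lemma mem_CF_some (k : ℕ) (i : Fin k) (a : ZMod 6) :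
    some (i,a) ∈ CF k ↔ a = 0 ∨ a = 2 ∨ a = 4 := by
  simp [CF, Finset.mem_product]

lemma none_not_mem_CF (k : ℕ) : none ∉ CF k := by simp [CF]

lemma CF_card (k : ℕ) : (CF k).card = 3 * k := by
  rw [CF, Finset.card_image_of_injective _ (Option.some_injective _), Finset.card_product,
    Finset.card_univ, Fintype.card_fin]
  have h3 : ({0,2,4} : Finset (ZMod 6)).card = 3 := by decide
  rw [h3]; ring

lemma zC1 : ∀ a : ZMod 6, ¬(a = 0 ∨ a = 2 ∨ a = 4) → (a + 1 = 0 ∨ a + 1 = 2 ∨ a + 1 = 4) := by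
  decide
lemma zC5 : ∀ a : ZMod 6, ¬(a = 0 ∨ a = 2 ∨ a = 4) → (a + 5 = 0 ∨ a + 5 = 2 ∨ a + 5 = 4) := by
  decide
lemma zsix : ∀ a : ZMod 6, a = a + 5 + 1 := by decide
lemma zwit : ∀ a b : ZMod 6, ¬(a = 0 ∨ a = 2 ∨ a = 4) → ¬(b = 0 ∨ b = 2 ∨ b = 4) → a ≠ b →
    (¬(a + 1 = b + 1 ∨ b = a + 1 + 1)) ∨ (¬(a + 5 = b + 1 ∨ b = a + 5 + 1)) := by decide

lemma exists_ne_fin (k : ℕ) (hk : 2 ≤ k) (i : Fin k) : ∃ j : Fin k, j ≠ i := by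
  haveI : Nontrivial (Fin k) := Fin.nontrivial_iff_two_le.mpr hk
  exact exists_ne i

lemma CF_LD (k : ℕ) (hk : 2 ≤ k) : (Gk k).LocatingDominatingSet ↑(CF k) := by
  have h6 : ∀ x : ZMod 6, x = 0 ∨ x = 1 ∨ x = 2 ∨ x = 3 ∨ x = 4 ∨ x = 5 := by decide
  constructor
  · rintro (_|⟨i,a⟩)
    · refine ⟨some (⟨0, by omega⟩, 0), ?_, Or.inr ?_⟩
      · simp [mem_CF_some]
      · show (0:ZMod 6) = 0; rfl
    · rcases h6 a with rfl|rfl|rfl|rfl|rfl|rfl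
      · exact ⟨some (i,0), by simp [mem_CF_some], Or.inl rfl⟩
      · exact ⟨some (i,0), by simp [mem_CF_some], Or.inr ⟨rfl, Or.inl (show (1:ZMod 6) = 0 + 1 by decide)⟩⟩
      · exact ⟨some (i,2), by simp [mem_CF_some], Or.inl rfl⟩
      · exact ⟨some (i,2), by simp [mem_CF_some], Or.inr ⟨rfl, Or.inl (show (3:ZMod 6) = 2 + 1 by decide)⟩⟩
      · exact ⟨some (i,4), by simp [mem_CF_some], Or.inl rfl⟩
      · exact ⟨some (i,4), by simp [mem_CF_some], Or.inr ⟨rfl, Or.inl (show (5:ZMod 6) = 4 + 1 by decide)⟩⟩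
  · rintro (_|⟨i,a⟩) hu (_|⟨j,b⟩) hv huv heq
    · exact huv rfl
    · -- u = none, v = some (j,b)
      obtain ⟨l, hl⟩ := exists_ne_fin k hk j
      have hmem : some (l, 0) ∈ (Gk k).neighborSet none ∩ ↑(CF k) := by
        refine ⟨?_, by simp [mem_CF_some]⟩
        show (0:ZMod 6) = 0; rfl
      rw [heq] at hmem
      exact hl (hmem.1.1.symm)
    · -- u = some (i,a), v = none
      obtain ⟨l, hl⟩ := exists_ne_fin k hk i
      have hmem : some (l, 0) ∈ (Gk k).neighborSet none ∩ ↑(CF k) := by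
        refine ⟨?_, by simp [mem_CF_some]⟩
        show (0:ZMod 6) = 0; rfl
      rw [← heq] at hmem
      exact hl (hmem.1.1.symm)
    · -- both some
      have ha : ¬(a = 0 ∨ a = 2 ∨ a = 4) := by
        intro h; exact hu (by simpa [mem_CF_some] using h)
      have hb : ¬(b = 0 ∨ b = 2 ∨ b = 4) := by
        intro h; exact hv (by simpa [mem_CF_some] using h)
      by_cases hij : i = j
      · subst hij
        have hab : a ≠ b := fun h => huv (by rw [h])
        rcases zwit a b ha hb hab with hw | hw
        · have hmem : some (i, a+1) ∈ (Gk k).neighborSet (some (i,a)) ∩ ↑(CF k) :=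
            ⟨⟨rfl, Or.inl rfl⟩, by simpa [mem_CF_some] using zC1 a ha⟩
          rw [heq] at hmem
          exact hw hmem.1.2
        · have hmem : some (i, a+5) ∈ (Gk k).neighborSet (some (i,a)) ∩ ↑(CF k) :=
            ⟨⟨rfl, Or.inr (zsix a)⟩, by simpa [mem_CF_some] using zC5 a ha⟩
          rw [heq] at hmem
          exact hw hmem.1.2
      · have hmem : some (i, a+1) ∈ (Gk k).neighborSet (some (i,a)) ∩ ↑(CF k) :=
          ⟨⟨rfl, Or.inl rfl⟩, by simpa [mem_CF_some] using zC1 a ha⟩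
        rw [heq] at hmem
        exact hij (hmem.1.1.symm)

def nb (A : Finset (ZMod 6)) (a : ZMod 6) : Finset (ZMod 6) :=
  A.filter (fun c => c = a + 1 ∨ a = c + 1)

set_option synthInstance.maxSize 2000 in
set_option synthInstance.maxHeartbeats 1000000 in
set_option maxHeartbeats 4000000 in
lemma core' : ∀ (A : Finset (ZMod 6)) (xc : Bool),
    ¬((∀ a : ZMod 6, a ∈ A ∨ a + 1 ∈ A ∨ a + 5 ∈ A ∨ (a = 0 ∧ xc = true)) ∧
    (∀ a ∉ A, ∀ b ∉ A, a ≠ b →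
      ¬(nb A a = nb A b ∧ ((a = 0 ∧ xc = true) ↔ (b = 0 ∧ xc = true))))) ∨
    (2 ≤ A.card ∧ (¬A.card = 2 ∨ (xc = true ∧ (0:ZMod 6) ∉ A ∧ nb A 0 = ∅))) := by decide

lemma core (A : Finset (ZMod 6)) (xc : Bool)
    (hdom : ∀ a : ZMod 6, a ∈ A ∨ a + 1 ∈ A ∨ a + 5 ∈ A ∨ (a = 0 ∧ xc = true))
    (hloc : ∀ a ∉ A, ∀ b ∉ A, a ≠ b →
      ¬(nb A a = nb A b ∧ ((a = 0 ∧ xc = true) ↔ (b = 0 ∧ xc = true)))) :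
    2 ≤ A.card ∧ (A.card = 2 → xc = true ∧ (0:ZMod 6) ∉ A ∧ nb A 0 = ∅) := by
  rcases core' A xc with h | h
  · exact absurd ⟨hdom, hloc⟩ h
  · exact ⟨h.1, fun h2 => (h.2.resolve_left (not_not.mpr h2))⟩

lemma zinv : ∀ a c : ZMod 6, a = c + 1 → c = a + 5 := by decide

lemma lower (k : ℕ) (hk : 2 ≤ k) (C : Set (Vk k))
    (hC : (Gk k).LocatingDominatingSet C) : 3 * k ≤ C.ncard := by
  classical
  set A : Fin k → Finset (ZMod 6) :=
    fun i => Finset.univ.filter (fun a => some (i,a) ∈ C) with hA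
  have memA : ∀ (i : Fin k) (a : ZMod 6), a ∈ A i ↔ some (i,a) ∈ C := by
    intro i a; simp [hA]
  set xc : Bool := if none ∈ C then true else false with hxc
  have xct : xc = true ↔ (none : Vk k) ∈ C := by
    by_cases h : (none : Vk k) ∈ C <;> simp [hxc, h]
  -- trace characterization
  have htr : ∀ (i : Fin k) (a : ZMod 6) (w : Vk k),
      w ∈ (Gk k).neighborSet (some (i,a)) ∩ C ↔
        ((w = none ∧ a = 0 ∧ (none : Vk k) ∈ C) ∨
          ∃ c, w = some (i,c) ∧ c ∈ nb (A i) a) := by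
    rintro i a (_|⟨j,c⟩)
    · constructor
      · rintro ⟨hadj, hmem⟩
        exact Or.inl ⟨rfl, hadj, hmem⟩
      · rintro (⟨-, h0, hmem⟩ | ⟨c, hc, -⟩)
        · exact ⟨h0, hmem⟩
        · exact absurd hc (by simp)
    · constructor
      · rintro ⟨⟨rfl, hrel⟩, hmem⟩
        exact Or.inr ⟨c, rfl, by
          rw [nb, Finset.mem_filter]
          exact ⟨(memA i c).mpr hmem, hrel⟩⟩
      · rintro (⟨h, -⟩ | ⟨c', hc', hmem⟩)
        · exact absurd h (by simp)
        · obtain ⟨rfl, rfl⟩ : i = j ∧ c' = c := by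
            simpa [Prod.ext_iff, eq_comm] using hc'
          rw [nb, Finset.mem_filter] at hmem
          exact ⟨⟨rfl, hmem.2⟩, (memA i c').mp hmem.1⟩
  -- per-copy facts
  have hcore : ∀ i : Fin k, 2 ≤ (A i).card ∧
      ((A i).card = 2 → xc = true ∧ (0:ZMod 6) ∉ A i ∧ nb (A i) 0 = ∅) := by
    intro i
    apply core
    · -- domination
      intro a
      obtain ⟨d, hd, heq | hadj⟩ := hC.1 (some (i,a))
      · cases d with
        | none => exact absurd heq (by simp)
        | some p =>
          obtain ⟨rfl, rfl⟩ : p.1 = i ∧ p.2 = a := by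
            simpa [Prod.ext_iff] using heq
          exact Or.inl ((memA _ _).mpr (by simpa using hd))
      · cases d with
        | none => exact Or.inr (Or.inr (Or.inr ⟨hadj, xct.mpr hd⟩))
        | some p =>
          obtain ⟨j, c⟩ := p
          obtain ⟨rfl, hrel | hrel⟩ := hadj
          · -- hrel : a = c + 1
            have hm := (memA j c).mpr hd
            rw [show c = a + 5 from zinv a c hrel] at hm
            exact Or.inr (Or.inr (Or.inl hm))
          · -- hrel : c = a + 1
            have hm := (memA j c).mpr hd
            rw [show c = a + 1 from hrel] at hm
            exact Or.inr (Or.inl hm)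
    · -- locating
      intro a ha b hb hab ⟨hnb, hiff⟩
      have hu : some (i,a) ∉ C := fun h => ha ((memA i a).mpr h)
      have hv : some (i,b) ∉ C := fun h => hb ((memA i b).mpr h)
      refine hC.2 (some (i,a)) hu (some (i,b)) hv (by simp [hab]) ?_
      ext w
      rw [htr, htr]
      constructor
      · rintro (⟨rfl, h0, hx⟩ | ⟨c, rfl, hc⟩)
        · obtain ⟨hb0, hx'⟩ := hiff.mp ⟨h0, xct.mpr hx⟩
          exact Or.inl ⟨rfl, hb0, xct.mp hx'⟩
        · exact Or.inr ⟨c, rfl, hnb ▸ hc⟩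
      · rintro (⟨rfl, h0, hx⟩ | ⟨c, rfl, hc⟩)
        · obtain ⟨ha0, hx'⟩ := hiff.mpr ⟨h0, xct.mpr hx⟩
          exact Or.inl ⟨rfl, ha0, xct.mp hx'⟩
        · exact Or.inr ⟨c, rfl, hnb.symm ▸ hc⟩
  -- uniqueness of the special copy
  have huniq : ∀ i j : Fin k, (A i).card = 2 → (A j).card = 2 → i = j := by
    intro i j hi hj
    by_contra hij
    obtain ⟨hxci, h0i, hnbi⟩ := (hcore i).2 hi
    obtain ⟨-, h0j, hnbj⟩ := (hcore j).2 hj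
    have hnc : (none : Vk k) ∈ C := xct.mp hxci
    have hui : some (i,(0:ZMod 6)) ∉ C := fun h => h0i ((memA i 0).mpr h)
    have huj : some (j,(0:ZMod 6)) ∉ C := fun h => h0j ((memA j 0).mpr h)
    refine hC.2 (some (i,(0:ZMod 6))) hui (some (j,(0:ZMod 6))) huj (by simp [hij]) ?_
    ext w
    rw [htr, htr]
    constructor
    · rintro (⟨rfl, -, -⟩ | ⟨c, rfl, hc⟩)
      · exact Or.inl ⟨rfl, rfl, hnc⟩
      · rw [hnbi] at hc; exact absurd hc (Finset.notMem_empty c)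
    · rintro (⟨rfl, -, -⟩ | ⟨c, rfl, hc⟩)
      · exact Or.inl ⟨rfl, rfl, hnc⟩
      · rw [hnbj] at hc; exact absurd hc (Finset.notMem_empty c)
  -- counting
  have hsome_inj : ∀ i : Fin k, Function.Injective (fun a : ZMod 6 => (some (i,a) : Vk k)) := by
    intro i a b h; simpa using h
  have hcount : C.ncard = (if (none : Vk k) ∈ C then 1 else 0) + ∑ i : Fin k, (A i).card := by
    rw [Set.ncard_eq_toFinset_card' C]
    rw [Finset.card_eq_sum_card_fiberwise
      (f := fun v : Vk k => Option.map Prod.fst v) (t := Finset.univ)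
      (fun x _ => Finset.mem_univ _)]
    rw [Fintype.sum_option]
    congr 1
    · -- none fiber
      have : (C.toFinset.filter fun v => Option.map Prod.fst v = none)
          = if (none : Vk k) ∈ C then {none} else ∅ := by
        ext v
        cases v with
        | none => by_cases h : (none : Vk k) ∈ C <;> simp [h]
        | some p => by_cases h : (none : Vk k) ∈ C <;> simp [h]
      rw [this]
      by_cases h : (none : Vk k) ∈ C <;> simp [h]
    · -- some fibers
      apply Finset.sum_congr rfl
      intro i _
      have : (C.toFinset.filter fun v => Option.map Prod.fst v = some i)
          = (A i).image (fun a => some (i,a)) := by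
        ext v
        cases v with
        | none => simp
        | some p =>
          obtain ⟨j, c⟩ := p
          simp only [Finset.mem_filter, Set.mem_toFinset, Option.map_some, Option.some_inj,
            Finset.mem_image]
          constructor
          · rintro ⟨hmem, rfl⟩
            exact ⟨c, (memA j c).mpr hmem, rfl⟩
          · rintro ⟨a, hmem, heq⟩
            obtain ⟨rfl, rfl⟩ : i = j ∧ a = c := by simpa [Prod.ext_iff] using heq
            exact ⟨(memA i a).mp hmem, rfl⟩
      rw [this, Finset.card_image_of_injective _ (hsome_inj i)]
  -- final arithmetic
  by_cases hT : ∃ i0 : Fin k, (A i0).card = 2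
  · obtain ⟨i0, hi0⟩ := hT
    have hnc : (none : Vk k) ∈ C := xct.mp ((hcore i0).2 hi0).1
    have hsum : (A i0).card + ∑ i ∈ Finset.univ.erase i0, (A i).card
        = ∑ i : Fin k, (A i).card :=
        Finset.add_sum_erase Finset.univ (fun i => (A i).card) (Finset.mem_univ i0)
    have herase : ∀ i ∈ Finset.univ.erase i0, 3 ≤ (A i).card := by
      intro i hi
      have hne : i ≠ i0 := (Finset.mem_erase.mp hi).1
      have h2 := (hcore i).1
      rcases Nat.lt_or_ge (A i).card 3 with h | h
      · have : (A i).card = 2 := by omega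
        exact absurd (huniq i i0 this hi0) hne
      · exact h
    have hsum2 : (Finset.univ.erase i0).card • 3 ≤ ∑ i ∈ Finset.univ.erase i0, (A i).card :=
      Finset.card_nsmul_le_sum _ _ _ herase
    have hcard_erase : (Finset.univ.erase i0).card = k - 1 := by
      rw [Finset.card_erase_of_mem (Finset.mem_univ i0), Finset.card_univ, Fintype.card_fin]
    rw [hcard_erase, smul_eq_mul] at hsum2
    have h2 := (hcore i0).1
    rw [hcount, if_pos hnc, ← hsum]
    omega
  · push_neg at hT
    have h3 : ∀ i : Fin k, 3 ≤ (A i).card := by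
      intro i
      have := (hcore i).1
      have := hT i
      omega
    have hsum2 : (Finset.univ : Finset (Fin k)).card • 3 ≤ ∑ i : Fin k, (A i).card :=
      Finset.card_nsmul_le_sum _ _ _ (fun i _ => h3 i)
    rw [Finset.card_univ, Fintype.card_fin, smul_eq_mul] at hsum2
    rw [hcount]
    omega

lemma Gk_gammaLD (k : ℕ) (hk : 2 ≤ k) : (Gk k).gammaLD = 3 * k := by
  have hmem : 3 * k ∈ {m : ℕ | ∃ C : Set (Vk k), (Gk k).LocatingDominatingSet C ∧ C.ncard = m} :=
    ⟨↑(CF k), CF_LD k hk, by rw [Set.ncard_coe_finset, CF_card]⟩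
  have hne : {m : ℕ | ∃ C : Set (Vk k), (Gk k).LocatingDominatingSet C ∧ C.ncard = m}.Nonempty :=
    ⟨3 * k, hmem⟩
  refine le_antisymm (Nat.sInf_le hmem) ?_
  obtain ⟨C, hCld, hCc⟩ := Nat.sInf_mem hne
  rw [SimpleGraph.gammaLD, ← hCc]
  exact lower k hk C hCld

/-- Proposition: for every `k ≥ 2` there is a connected graph of order `n = 6k+1`,
girth at least 5, minimum degree at least 2, and location-domination number
`3k = (n-1)/2`. -/
theorem exists_connected_graph_gammaLD_eq_half
    (k : ℕ) (hk : 2 ≤ k) :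
    ∃ (V : Type) (inst : Fintype V) (G : SimpleGraph V),
      G.Connected ∧
      @Fintype.card V inst = 6 * k + 1 ∧
      5 ≤ G.egirth ∧
      (∀ v : V, 2 ≤ (G.neighborSet v).ncard) ∧
      G.gammaLD = 3 * k := by
  exact ⟨Vk k, inferInstance, Gk k, Gk_connected k, Gk_card k, Gk_egirth k,
    Gk_minDeg k hk, Gk_gammaLD k hk⟩
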